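/- For every ε > 0 there exists δ > 0 such that the following holds. If p ≤ n^{−1+δ} and G₁, G₂ ~ G(n,p) are two independent binomial random graphs on n vertices, then with high probability M(G₁,G₂) ≤ (1+ε)·n, where M(G₁,G₂) denotes the maximum number of edges of a graph that is isomorphic to a subgraph of G₁ and also to a subgraph of G₂. -/

import Mathlib

open MeasureTheory Filter
open scoped ENNReal

/-- Bernoulli measure on `Bool` with success probability (the truncation to `[0,1]` of) `p`. -/
noncomputable def bernoulliPMF (p : ℝ) : PMF Bool :=
  PMF.bernoulli (min (Real.toNNReal p) 1) (min_le_right _ _)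

/-- The Erdős–Rényi measure `G(n,p)`: each potential edge (element of `Sym2 (Fin n)`)
is present independently with probability `p`. -/
noncomputable def erMeasure (n : ℕ) (p : ℝ) : Measure (Sym2 (Fin n) → Bool) :=
  Measure.pi fun _ => (bernoulliPMF p).toMeasure

instance (n : ℕ) (p : ℝ) : IsProbabilityMeasure (erMeasure n p) := by
  unfold erMeasure; infer_instance

/-- The simple graph on `Fin n` encoded by an edge-indicator function. -/
def graphOfFun {n : ℕ} (f : Sym2 (Fin n) → Bool) : SimpleGraph (Fin n) where
  Adj u v := u ≠ v ∧ f s(u, v) = true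
  symm := ⟨fun u v ⟨h1, h2⟩ => ⟨h1.symm, by rwa [Sym2.eq_swap]⟩⟩
  loopless := ⟨fun u ⟨h1, _⟩ => h1 rfl⟩
/-- The KeyChain graph `KC(n,t,ℓ)` on vertex set `Fin n` (vertex `i ∈ [n]` is index `i-1`):
a cycle on the first `n-t` vertices plus `t` pendant "keys", the `i`-th key attached to
cycle vertex `i·ℓ`. -/
def keyChain (n t ℓ : ℕ) : SimpleGraph (Fin n) :=
  SimpleGraph.fromRel (fun a b =>
    ((a : ℕ) + 1 ≤ n - t - 1 ∧ (b : ℕ) = (a : ℕ) + 1) ∨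
    ((a : ℕ) + 1 = n - t ∧ (b : ℕ) = 0) ∨
    (∃ i, 1 ≤ i ∧ i ≤ t ∧ (a : ℕ) + 1 = i * ℓ ∧ (b : ℕ) + 1 = n - t + i))

/-- `H` is contained in `G` as a subgraph (up to isomorphism). -/
def containsCopy {α β : Type*} (H : SimpleGraph α) (G : SimpleGraph β) : Prop :=
  ∃ φ : α → β, Function.Injective φ ∧ ∀ a b, H.Adj a b → G.Adj (φ a) (φ b)

/-- The sequence `a₁ = 1`, `a_{j+1} = ⌈a_j · log n / 100⌉` (indexed so that `aSeq n j = a_j`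
for `j ≥ 1`). -/
noncomputable def aSeq (n : ℕ) : ℕ → ℕ
  | 0 => 1
  | 1 => 1
  | (j + 2) => ⌈(aSeq n (j + 1) : ℝ) * Real.log n / 100⌉₊

/-- `j₀`: the minimal index `j` with `a_j ≥ 10n / log n`. -/
noncomputable def jZero (n : ℕ) : ℕ :=
  sInf {j : ℕ | 1 ≤ j ∧ 10 * (n : ℝ) / Real.log n ≤ (aSeq n j : ℝ)}

/-- `t = ⌊log n⌋`. -/
noncomputable def tParam (n : ℕ) : ℕ := ⌊Real.log n⌋₊

/-- `ℓ = 2·j₀`. -/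
noncomputable def ellParam (n : ℕ) : ℕ := 2 * jZero n

-- cylinder measure
lemma erMeasure_cylinder (n : ℕ) (p : ℝ) (T : Finset (Sym2 (Fin n))) :
    erMeasure n p {f | ∀ e ∈ T, f e = true} = (min (ENNReal.ofReal p) 1) ^ T.card := by
  classical
  have hset : {f : Sym2 (Fin n) → Bool | ∀ e ∈ T, f e = true}
      = Set.pi Set.univ (fun e => if e ∈ T then ({true} : Set Bool) else Set.univ) := by
    ext f
    simp only [Set.mem_setOf_eq, Set.mem_pi, Set.mem_univ, true_implies]
    constructor
    · intro h e
      by_cases he : e ∈ T <;> simp [he, h e]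
    · intro h e he
      have := h e
      simpa [he] using this
  rw [hset, erMeasure, Measure.pi_pi]
  have hsing : (bernoulliPMF p).toMeasure ({true} : Set Bool) = min (ENNReal.ofReal p) 1 := by
    rw [PMF.toMeasure_apply_singleton _ _ (measurableSet_singleton _)]
    rw [bernoulliPMF, PMF.bernoulli_apply]
    rfl
  calc ∏ e : Sym2 (Fin n),
        (bernoulliPMF p).toMeasure (if e ∈ T then ({true} : Set Bool) else Set.univ)
      = ∏ e : Sym2 (Fin n), (if e ∈ T then min (ENNReal.ofReal p) 1 else 1) := by
        refine Finset.prod_congr rfl fun e _ => ?_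
        by_cases he : e ∈ T
        · rw [if_pos he, if_pos he, hsing]
        · rw [if_neg he, if_neg he, measure_univ]
    _ = ∏ _e ∈ T, min (ENNReal.ofReal p) 1 := by
        rw [Finset.prod_ite_mem, Finset.univ_inter]
    _ = (min (ENNReal.ofReal p) 1) ^ T.card := Finset.prod_const _

/-- Elementary event for the union bound. -/
def elemEvent {n : ℕ} (σ : Equiv.Perm (Fin n)) (T : Finset (Sym2 (Fin n))) :
    Set ((Sym2 (Fin n) → Bool) × (Sym2 (Fin n) → Bool)) :=
  {f | ∀ e ∈ T, f e = true} ×ˢ {f | ∀ e ∈ T.image (Sym2.map σ), f e = true}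

lemma elemEvent_measure {n : ℕ} (p : ℝ) (σ : Equiv.Perm (Fin n)) (T : Finset (Sym2 (Fin n))) :
    ((erMeasure n p).prod (erMeasure n p)) (elemEvent σ T)
      = (min (ENNReal.ofReal p) 1) ^ (2 * T.card) := by
  rw [elemEvent, Measure.prod_prod, erMeasure_cylinder, erMeasure_cylinder,
    Finset.card_image_of_injective _ (Sym2.map.injective σ.injective), ← pow_add, two_mul]

lemma coverage {n : ℕ} {ε : ℝ} (hε : 0 < ε)
    (fg : (Sym2 (Fin n) → Bool) × (Sym2 (Fin n) → Bool))
    (hfg : ¬ (∀ H : SimpleGraph (Fin n), containsCopy H (graphOfFun fg.1) →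
        containsCopy H (graphOfFun fg.2) → (H.edgeSet.ncard : ℝ) ≤ (1 + ε) * n)) :
    ∃ σ : Equiv.Perm (Fin n),
      ∃ T ∈ Finset.powersetCard (⌊(1+ε) * (n:ℝ)⌋₊ + 1) (Finset.univ : Finset (Sym2 (Fin n))),
      fg ∈ elemEvent σ T := by
  classical
  push_neg at hfg
  obtain ⟨H, ⟨φ1, h1i, h1a⟩, ⟨φ2, h2i, h2a⟩, hcard⟩ := hfg
  set m₀ : ℕ := ⌊(1+ε) * (n:ℝ)⌋₊ + 1 with hm₀
  -- m₀ ≤ ncard of edge set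
  have hnn : (0:ℝ) ≤ (1+ε) * n := by positivity
  have hflt : ⌊(1+ε) * (n:ℝ)⌋₊ < H.edgeSet.ncard := (Nat.floor_lt hnn).2 hcard
  have hm₀le : m₀ ≤ H.edgeSet.ncard := hflt
  -- extract a subset of edges of size m₀
  have hfin : H.edgeSet.Finite := Set.toFinite _
  rw [Set.ncard_eq_toFinset_card _ hfin] at hm₀le
  obtain ⟨T0, hT0sub, hT0card⟩ := Finset.exists_subset_card_eq hm₀le
  have hT0mem : ∀ e ∈ T0, e ∈ H.edgeSet := fun e he => hfin.mem_toFinset.1 (hT0sub he)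
  -- the permutation
  have hb1 : Function.Bijective φ1 := Finite.injective_iff_bijective.1 h1i
  have hb2 : Function.Bijective φ2 := Finite.injective_iff_bijective.1 h2i
  set e1 := Equiv.ofBijective φ1 hb1
  set e2 := Equiv.ofBijective φ2 hb2
  refine ⟨e1.symm.trans e2, T0.image (Sym2.map φ1), ?_, ?_, ?_⟩
  · rw [Finset.mem_powersetCard]
    exact ⟨Finset.subset_univ _,
      by rw [Finset.card_image_of_injective _ (Sym2.map.injective h1i), hT0card]⟩
  · -- first coordinate
    intro e he
    obtain ⟨e0, he0, rfl⟩ := Finset.mem_image.1 he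
    induction e0 using Sym2.ind with
    | _ a b =>
      have hadj : H.Adj a b := (SimpleGraph.mem_edgeSet H).1 (hT0mem _ he0)
      have := And.right (h1a a b hadj)
      rwa [Sym2.map_pair_eq]
  · -- second coordinate
    intro e he
    simp only [Finset.mem_image] at he
    obtain ⟨e', he', rfl⟩ := he
    obtain ⟨e0, he0, rfl⟩ := he'
    induction e0 using Sym2.ind with
    | _ a b =>
      have hadj : H.Adj a b := (SimpleGraph.mem_edgeSet H).1 (hT0mem _ he0)
      have hσ : ∀ a, (e1.symm.trans e2) (φ1 a) = φ2 a := by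
        intro a
        have : e1.symm (φ1 a) = a := e1.symm_apply_apply a
        simp [Equiv.trans_apply, this, e2, Equiv.ofBijective_apply]
      have := And.right (h2a a b hadj)
      rw [Sym2.map_pair_eq, Sym2.map_pair_eq, hσ, hσ]
      exact this

lemma bad_bound (ε : ℝ) (hε : 0 < ε) (n : ℕ) (p : ℝ) :
    ((erMeasure n p).prod (erMeasure n p))
      ({fg | ∀ H : SimpleGraph (Fin n), containsCopy H (graphOfFun fg.1) →
          containsCopy H (graphOfFun fg.2) → (H.edgeSet.ncard : ℝ) ≤ (1 + ε) * n}ᶜ)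
      ≤ (Nat.factorial n : ℝ≥0∞) * ((Fintype.card (Sym2 (Fin n))).choose (⌊(1+ε) * (n:ℝ)⌋₊ + 1) : ℝ≥0∞)
        * (min (ENNReal.ofReal p) 1) ^ (2 * (⌊(1+ε) * (n:ℝ)⌋₊ + 1)) := by
  classical
  set m₀ : ℕ := ⌊(1+ε) * (n:ℝ)⌋₊ + 1 with hm₀
  set q : ℝ≥0∞ := min (ENNReal.ofReal p) 1 with hq
  set μ2 := (erMeasure n p).prod (erMeasure n p) with hμ2
  have hcover : {fg : (Sym2 (Fin n) → Bool) × (Sym2 (Fin n) → Bool) |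
        ∀ H : SimpleGraph (Fin n), containsCopy H (graphOfFun fg.1) →
          containsCopy H (graphOfFun fg.2) → (H.edgeSet.ncard : ℝ) ≤ (1 + ε) * n}ᶜ
      ⊆ ⋃ σ ∈ (Finset.univ : Finset (Equiv.Perm (Fin n))),
          ⋃ T ∈ Finset.powersetCard m₀ (Finset.univ : Finset (Sym2 (Fin n))),
            elemEvent σ T := by
    intro fg hfg
    obtain ⟨σ, T, hT, hmem⟩ := coverage hε fg hfg
    exact Set.mem_biUnion (Finset.mem_univ σ) (Set.mem_biUnion hT hmem)
  calc μ2 _ ≤ μ2 (⋃ σ ∈ (Finset.univ : Finset (Equiv.Perm (Fin n))),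
          ⋃ T ∈ Finset.powersetCard m₀ (Finset.univ : Finset (Sym2 (Fin n))),
            elemEvent σ T) := measure_mono hcover
    _ ≤ ∑ σ ∈ (Finset.univ : Finset (Equiv.Perm (Fin n))),
          μ2 (⋃ T ∈ Finset.powersetCard m₀ (Finset.univ : Finset (Sym2 (Fin n))),
            elemEvent σ T) := measure_biUnion_finset_le _ _
    _ ≤ ∑ _σ ∈ (Finset.univ : Finset (Equiv.Perm (Fin n))),
          ∑ T ∈ Finset.powersetCard m₀ (Finset.univ : Finset (Sym2 (Fin n))),
            q ^ (2 * m₀) := by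
        refine Finset.sum_le_sum fun σ _ => ?_
        refine (measure_biUnion_finset_le _ _).trans ?_
        refine Finset.sum_le_sum fun T hT => ?_
        have hc : T.card = m₀ := (Finset.mem_powersetCard.1 hT).2
        rw [hμ2, elemEvent_measure, hc]
    _ = (Nat.factorial n : ℝ≥0∞) * ((Fintype.card (Sym2 (Fin n))).choose m₀ : ℝ≥0∞) * q ^ (2 * m₀) := by
        rw [Finset.sum_const, Finset.sum_const, Finset.card_powersetCard, Finset.card_univ,
          Finset.card_univ, Fintype.card_perm, Fintype.card_fin]
        simp [nsmul_eq_mul, mul_assoc]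

lemma factorial_mul_pow_le (n k : ℕ) :
    Nat.factorial n * n ^ k ≤ Nat.factorial (n + k) := by
  induction k with
  | zero => simp
  | succ k ih =>
      have h : Nat.factorial n * n ^ (k+1) = (Nat.factorial n * n ^ k) * n := by ring
      rw [h]
      calc (Nat.factorial n * n ^ k) * n ≤ Nat.factorial (n+k) * n :=
            Nat.mul_le_mul_right _ ih
        _ ≤ Nat.factorial (n+k) * (n+k+1) := Nat.mul_le_mul_left _ (by omega)
        _ = Nat.factorial (n+k+1) := by rw [Nat.factorial_succ]; ring

lemma sym2_card_le (n : ℕ) : Fintype.card (Sym2 (Fin n)) ≤ n ^ 2 := by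
  rw [Sym2.card, Fintype.card_fin, Nat.choose_two_right]
  rcases Nat.eq_zero_or_pos n with h | h
  · simp [h]
  · refine Nat.div_le_of_le_mul ?_
    have h1 : n ≤ n * n := Nat.le_mul_of_pos_left n h
    have h2 : (n+1) * (n+1-1) = n * n + n := by
      simp [Nat.add_sub_cancel]; ring
    rw [h2, Nat.pow_two]
    omega

lemma R_tendsto (ε : ℝ) (hε : 0 < ε) :
    Tendsto (fun n : ℕ => ((Nat.factorial n : ℝ)
      * ((Fintype.card (Sym2 (Fin n))).choose (⌊(1+ε) * (n:ℝ)⌋₊ + 1) : ℝ))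
      * (((n:ℝ) ^ (-1 + ε / (4 * (1 + ε)))) ^ (2 * (⌊(1+ε) * (n:ℝ)⌋₊ + 1))))
      atTop (nhds 0) := by
  set δ : ℝ := ε / (4 * (1 + ε)) with hδdef
  have h1ε : (0:ℝ) < 1 + ε := by linarith
  have hδpos : 0 < δ := by positivity
  have hδeq : δ * (4 * (1 + ε)) = ε := by
    rw [hδdef]; field_simp
  have h2δ : 0 ≤ 1 - 2 * δ := by nlinarith
  apply squeeze_zero' (g := fun n : ℕ => (n:ℝ) ^ (-1 : ℝ))
  · filter_upwards with n
    have : (0:ℝ) ≤ (n:ℝ) ^ (-1 + δ) := Real.rpow_nonneg (Nat.cast_nonneg n) _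
    positivity
  · have hev : ∀ᶠ n : ℕ in atTop, (2:ℝ)/ε ≤ (n:ℝ) ∧ 1 ≤ (n:ℝ) := by
      have h2 : Tendsto (fun n : ℕ => (n:ℝ)) atTop atTop := tendsto_natCast_atTop_atTop
      filter_upwards [h2.eventually_ge_atTop ((2:ℝ)/ε), h2.eventually_ge_atTop 1] with n ha hb
      exact ⟨ha, hb⟩
    filter_upwards [hev] with n hn
    obtain ⟨hnε, hn1⟩ := hn
    set b : ℝ := (n:ℝ) with hbdef
    have hb0 : (0:ℝ) < b := lt_of_lt_of_le one_pos hn1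
    have hεb : 2 ≤ ε * b := by
      rw [div_le_iff₀ hε] at hnε
      linarith [hnε]
    set m₀ : ℕ := ⌊(1+ε) * b⌋₊ + 1 with hm₀def
    have hnm : n ≤ m₀ := by
      have h : (n:ℝ) ≤ (1+ε) * b := by nlinarith
      have := Nat.le_floor h
      omega
    have hm₀r : (1+ε) * b < (m₀ : ℝ) := by
      rw [hm₀def]
      push_cast
      exact Nat.lt_floor_add_one _
    set M : ℕ := Fintype.card (Sym2 (Fin n)) with hMdef
    -- natural number inequalities
    have t1 : (M.choose m₀) * Nat.factorial m₀ ≤ M ^ m₀ := by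
      rw [mul_comm, ← Nat.descFactorial_eq_factorial_mul_choose]
      exact Nat.descFactorial_le_pow M m₀
    have t2 : Nat.factorial n * n ^ (m₀ - n) ≤ Nat.factorial m₀ := by
      have := factorial_mul_pow_le n (m₀ - n)
      rwa [Nat.add_sub_cancel' hnm] at this
    -- real versions
    have hP0 : (0:ℝ) < b ^ (m₀ - n) := by positivity
    have t1r : (M.choose m₀ : ℝ) * (Nat.factorial m₀ : ℝ) ≤ (M:ℝ) ^ m₀ := by
      exact_mod_cast t1
    have t2r : (Nat.factorial n : ℝ) * b ^ (m₀ - n) ≤ (Nat.factorial m₀ : ℝ) := by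
      rw [hbdef]; exact_mod_cast t2
    have hAC : (Nat.factorial n : ℝ) * (M.choose m₀ : ℝ)
        ≤ (M:ℝ) ^ m₀ / b ^ (m₀ - n) := by
      rw [le_div_iff₀ hP0]
      calc (Nat.factorial n : ℝ) * (M.choose m₀ : ℝ) * b ^ (m₀ - n)
          = (M.choose m₀ : ℝ) * ((Nat.factorial n : ℝ) * b ^ (m₀ - n)) := by ring
        _ ≤ (M.choose m₀ : ℝ) * (Nat.factorial m₀ : ℝ) :=
            mul_le_mul_of_nonneg_left t2r (Nat.cast_nonneg _)
        _ ≤ (M:ℝ) ^ m₀ := t1r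
    have hx0 : (0:ℝ) ≤ b ^ (-1 + δ) := Real.rpow_nonneg hb0.le _
    have hxpow : (0:ℝ) ≤ (b ^ (-1 + δ)) ^ (2 * m₀) := by positivity
    have hMr : (M:ℝ) ≤ b ^ 2 := by
      calc (M:ℝ) ≤ ((n^2 : ℕ) : ℝ) := by exact_mod_cast sym2_card_le n
        _ = b ^ 2 := by push_cast; ring
    have hE : ((2*m₀ : ℕ) : ℝ) + (-1 + δ) * ((2*m₀ : ℕ) : ℝ) - ((m₀:ℝ) - (n:ℝ))
        ≤ (-1 : ℝ) := by
      have h2m : ((2*m₀ : ℕ) : ℝ) = 2 * (m₀:ℝ) := by push_cast; ring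
      have hprod : 0 ≤ (1 - 2*δ) * ((m₀:ℝ) - (1+ε)*b) :=
        mul_nonneg h2δ (by linarith)
      have hδb : δ * (4 * (1 + ε)) * b = ε * b := by rw [hδeq]
      rw [h2m]
      nlinarith [hprod, hεb, hδb]
    calc (Nat.factorial n : ℝ) * (M.choose m₀ : ℝ) * (b ^ (-1 + δ)) ^ (2 * m₀)
        ≤ ((M:ℝ) ^ m₀ / b ^ (m₀ - n)) * (b ^ (-1 + δ)) ^ (2 * m₀) :=
          mul_le_mul_of_nonneg_right hAC hxpow
      _ ≤ ((b ^ 2) ^ m₀ / b ^ (m₀ - n)) * (b ^ (-1 + δ)) ^ (2 * m₀) := by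
          gcongr
      _ = b ^ (((2*m₀ : ℕ) : ℝ) + (-1 + δ) * ((2*m₀ : ℕ) : ℝ) - ((m₀:ℝ) - (n:ℝ))) := by
          rw [← pow_mul, ← Real.rpow_natCast b (2*m₀), ← Real.rpow_natCast (b ^ (-1 + δ)) (2*m₀),
            ← Real.rpow_natCast b (m₀ - n), ← Real.rpow_mul hb0.le, Nat.cast_sub hnm,
            div_mul_eq_mul_div, ← Real.rpow_add hb0, Real.rpow_sub hb0,
            Real.rpow_sub hb0, Real.rpow_sub hb0]
      _ ≤ b ^ (-1 : ℝ) := Real.rpow_le_rpow_of_exponent_le hn1 hE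
  · have := (tendsto_rpow_neg_atTop (y := 1) one_pos).comp
      (tendsto_natCast_atTop_atTop (R := ℝ))
    exact this


/-- **Proposition (maximum common subgraph).** For every `ε > 0` there is `δ > 0` such that if
`p ≤ n^(−1+δ)` and `G₁, G₂ ~ G(n,p)` are independent, then whp every common subgraph of
`G₁` and `G₂` has at most `(1+ε)·n` edges, i.e. `M(G₁,G₂) ≤ (1+ε)n`. -/
theorem max_common_subgraph (ε : ℝ) (hε : 0 < ε) :
    ∃ δ : ℝ, 0 < δ ∧ ∀ p : ℕ → ℝ, (∀ n, 0 ≤ p n) →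
      (∀ n : ℕ, p n ≤ (n : ℝ) ^ (-1 + δ)) →
      Tendsto (fun n : ℕ => ((erMeasure n (p n)).prod (erMeasure n (p n)))
          {fg | ∀ H : SimpleGraph (Fin n),
            containsCopy H (graphOfFun fg.1) → containsCopy H (graphOfFun fg.2) →
            (H.edgeSet.ncard : ℝ) ≤ (1 + ε) * n})
        atTop (nhds 1) := by
  have h1ε : (0:ℝ) < 1 + ε := by linarith
  refine ⟨ε / (4 * (1 + ε)), by positivity, ?_⟩
  intro p hp0 hp
  set δ : ℝ := ε / (4 * (1 + ε)) with hδdef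
  have hmeas : ∀ n : ℕ, MeasurableSet
      {fg : (Sym2 (Fin n) → Bool) × (Sym2 (Fin n) → Bool) | ∀ H : SimpleGraph (Fin n),
        containsCopy H (graphOfFun fg.1) → containsCopy H (graphOfFun fg.2) →
        (H.edgeSet.ncard : ℝ) ≤ (1 + ε) * n} := fun n =>
    (Set.to_countable _).measurableSet
  have hbad : ∀ n : ℕ, ((erMeasure n (p n)).prod (erMeasure n (p n)))
      ({fg | ∀ H : SimpleGraph (Fin n), containsCopy H (graphOfFun fg.1) →
          containsCopy H (graphOfFun fg.2) → (H.edgeSet.ncard : ℝ) ≤ (1 + ε) * n}ᶜ)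
      ≤ ENNReal.ofReal (((Nat.factorial n : ℝ)
        * ((Fintype.card (Sym2 (Fin n))).choose (⌊(1+ε) * (n:ℝ)⌋₊ + 1) : ℝ))
        * (((n:ℝ) ^ (-1 + δ)) ^ (2 * (⌊(1+ε) * (n:ℝ)⌋₊ + 1)))) := by
    intro n
    refine (bad_bound ε hε n (p n)).trans ?_
    have hq : min (ENNReal.ofReal (p n)) 1 ≤ ENNReal.ofReal ((n:ℝ) ^ (-1 + δ)) :=
      (min_le_left _ _).trans (ENNReal.ofReal_le_ofReal (hp n))
    have hx0 : (0:ℝ) ≤ (n:ℝ) ^ (-1 + δ) := Real.rpow_nonneg (Nat.cast_nonneg n) _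
    calc (Nat.factorial n : ℝ≥0∞)
          * ((Fintype.card (Sym2 (Fin n))).choose (⌊(1+ε) * (n:ℝ)⌋₊ + 1) : ℝ≥0∞)
          * (min (ENNReal.ofReal (p n)) 1) ^ (2 * (⌊(1+ε) * (n:ℝ)⌋₊ + 1))
        ≤ (Nat.factorial n : ℝ≥0∞)
          * ((Fintype.card (Sym2 (Fin n))).choose (⌊(1+ε) * (n:ℝ)⌋₊ + 1) : ℝ≥0∞)
          * (ENNReal.ofReal ((n:ℝ) ^ (-1 + δ))) ^ (2 * (⌊(1+ε) * (n:ℝ)⌋₊ + 1)) := by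
          gcongr
      _ = ENNReal.ofReal (((Nat.factorial n : ℝ)
          * ((Fintype.card (Sym2 (Fin n))).choose (⌊(1+ε) * (n:ℝ)⌋₊ + 1) : ℝ))
          * (((n:ℝ) ^ (-1 + δ)) ^ (2 * (⌊(1+ε) * (n:ℝ)⌋₊ + 1)))) := by
          rw [ENNReal.ofReal_mul (by positivity), ENNReal.ofReal_mul (by positivity),
            ENNReal.ofReal_pow hx0, ENNReal.ofReal_natCast, ENNReal.ofReal_natCast]
  have hR : Tendsto (fun n : ℕ => ((Nat.factorial n : ℝ)
      * ((Fintype.card (Sym2 (Fin n))).choose (⌊(1+ε) * (n:ℝ)⌋₊ + 1) : ℝ))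
      * (((n:ℝ) ^ (-1 + δ)) ^ (2 * (⌊(1+ε) * (n:ℝ)⌋₊ + 1)))) atTop (nhds 0) := by
    rw [hδdef]
    exact R_tendsto ε hε
  have hbad0 : Tendsto (fun n : ℕ => ((erMeasure n (p n)).prod (erMeasure n (p n)))
      ({fg | ∀ H : SimpleGraph (Fin n), containsCopy H (graphOfFun fg.1) →
          containsCopy H (graphOfFun fg.2) → (H.edgeSet.ncard : ℝ) ≤ (1 + ε) * n}ᶜ))
      atTop (nhds 0) := by
    refine tendsto_of_tendsto_of_tendsto_of_le_of_le
      (tendsto_const_nhds (x := (0:ℝ≥0∞))) ?_ (fun n => zero_le) hbad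
    have := ENNReal.tendsto_ofReal (a := 0) hR
    simpa using this
  have hcompl : ∀ n : ℕ, ((erMeasure n (p n)).prod (erMeasure n (p n)))
      {fg | ∀ H : SimpleGraph (Fin n), containsCopy H (graphOfFun fg.1) →
          containsCopy H (graphOfFun fg.2) → (H.edgeSet.ncard : ℝ) ≤ (1 + ε) * n}
      = 1 - ((erMeasure n (p n)).prod (erMeasure n (p n)))
      ({fg | ∀ H : SimpleGraph (Fin n), containsCopy H (graphOfFun fg.1) →
          containsCopy H (graphOfFun fg.2) → (H.edgeSet.ncard : ℝ) ≤ (1 + ε) * n}ᶜ) := by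
    intro n
    have h := measure_compl (μ := (erMeasure n (p n)).prod (erMeasure n (p n)))
      (hmeas n).compl (measure_ne_top _ _)
    rwa [compl_compl, measure_univ] at h
  refine Tendsto.congr (fun n => (hcompl n).symm) ?_
  have h := ENNReal.Tendsto.sub (tendsto_const_nhds (x := (1:ℝ≥0∞))) hbad0
    (Or.inl ENNReal.one_ne_top)
  simpa only [tsub_zero] using h
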